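/- Let q be a probability density on ℝ satisfying: q positive and twice continuously differentiable, ∫ q' = 0, and E_{Z∼q}[sup_{t∈[Z−ζ,Z+ζ]} |(d²/dt²) log q(t)|²] < ∞ for some ζ > 0. Let μ_d = c/√d with c > 0, let q₊^{(d)}, q₋^{(d)} be the laws of Z + μ_d and Z − μ_d, and let (X₊, X₋) be any maximal coupling of them. Then for every δ > 0, P(X₊ ≠ X₋) / d^{−1/2+δ} → 0 as d → ∞. -/

import Mathlib

set_option maxHeartbeats 1000000
open MeasureTheory Filter Set

lemma not_always_big_deriv (q : ℝ → ℝ) (hpos : ∀ z, 0 < q z)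
    (hdiff : ∀ x, DifferentiableAt ℝ q x) (hcont : Continuous (deriv q))
    (hqi : Integrable q) (R : ℝ)
    (hcon : ∀ b ∈ Ici R, 1 < |deriv q b|) : False := by
  have hsign : (∀ x ∈ Ici R, 1 < deriv q x) ∨ (∀ x ∈ Ici R, deriv q x < -1) := by
    have halt : ∀ x ∈ Ici R, 1 < deriv q x ∨ deriv q x < -1 := by
      intro x hx
      rcases lt_abs.mp (hcon x hx) with h | h
      · exact Or.inl h
      · exact Or.inr (by linarith)
    by_contra hc
    push_neg at hc
    obtain ⟨⟨x₀, hx₀, hx₀'⟩, ⟨x₁, hx₁, hx₁'⟩⟩ := hc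
    have h₀ : deriv q x₀ < -1 := (halt x₀ hx₀).resolve_left (not_lt.mpr hx₀')
    have h₁ : 1 < deriv q x₁ := (halt x₁ hx₁).resolve_right (not_lt.mpr hx₁')
    have h0mem : (0:ℝ) ∈ uIcc (deriv q x₀) (deriv q x₁) := by
      rw [Set.mem_uIcc]; left; constructor <;> linarith
    have := intermediate_value_uIcc (hcont.continuousOn (s := uIcc x₀ x₁)) h0mem
    obtain ⟨c, hc₁, hc₂⟩ := this
    have hcR : c ∈ Ici R := by
      rcases Set.mem_uIcc.mp hc₁ with h | h
      · exact le_trans hx₀ h.1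
      · exact le_trans hx₁ h.1
    have := hcon c hcR
    rw [hc₂, abs_zero] at this
    linarith
  -- FTC: q x - q R = ∫ deriv q on [R, x]
  have hftc : ∀ x, R ≤ x → q x - q R = ∫ t in R..x, deriv q t := by
    intro x hx
    exact (intervalIntegral.integral_deriv_eq_sub (fun t _ => hdiff t)
      (hcont.intervalIntegrable R x)).symm
  rcases hsign with hs | hs
  · -- deriv q > 1 on [R, ∞): q grows linearly, not integrable
    have hgrow : ∀ x, R ≤ x → x - R ≤ q x := by
      intro x hx
      have h1 : ∫ t in R..x, (1:ℝ) ≤ ∫ t in R..x, deriv q t := by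
        apply intervalIntegral.integral_mono_on hx intervalIntegrable_const
          (hcont.intervalIntegrable R x)
        intro t ht
        exact (hs t ht.1).le
      rw [intervalIntegral.integral_const] at h1
      have := hftc x hx
      have hq0 := (hpos R).le
      simp only [smul_eq_mul, mul_one] at h1
      linarith
    have hsub : Ici (R + 1) ⊆ {a | 1 ≤ q a} := by
      intro x hx
      simp only [Set.mem_Ici] at hx
      have := hgrow x (by linarith)
      simp only [Set.mem_setOf_eq]
      linarith
    have hlt := hqi.measure_ge_lt_top (by norm_num : (0:ℝ) < 1)
    have : volume (Ici (R + 1)) ≤ volume {a | 1 ≤ q a} := measure_mono hsub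
    rw [Real.volume_Ici] at this
    exact absurd (lt_of_le_of_lt this hlt) (by simp)
  · -- deriv q < -1: q becomes negative
    set x := R + q R + 1 with hxdef
    have hx : R ≤ x := by have := (hpos R).le; simp [hxdef]; linarith
    have h1 : ∫ t in R..x, deriv q t ≤ ∫ t in R..x, (-1:ℝ) := by
      apply intervalIntegral.integral_mono_on hx (hcont.intervalIntegrable R x)
        intervalIntegrable_const
      intro t ht
      exact (hs t ht.1).le
    rw [intervalIntegral.integral_const] at h1
    have := hftc x hx
    have hqx := hpos x
    simp only [smul_eq_mul, mul_neg, mul_one] at h1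
    have hxR : x - R = q R + 1 := by simp [hxdef]; ring
    linarith


lemma not_always_big_deriv_left (q : ℝ → ℝ) (hpos : ∀ z, 0 < q z)
    (hdiff : ∀ x, DifferentiableAt ℝ q x) (hcont : Continuous (deriv q))
    (hqi : Integrable q) (R : ℝ)
    (hcon : ∀ b ∈ Iic R, 1 < |deriv q b|) : False := by
  have hsign : (∀ x ∈ Iic R, 1 < deriv q x) ∨ (∀ x ∈ Iic R, deriv q x < -1) := by
    have halt : ∀ x ∈ Iic R, 1 < deriv q x ∨ deriv q x < -1 := by
      intro x hx
      rcases lt_abs.mp (hcon x hx) with h | h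
      · exact Or.inl h
      · exact Or.inr (by linarith)
    by_contra hc
    push_neg at hc
    obtain ⟨⟨x₀, hx₀, hx₀'⟩, ⟨x₁, hx₁, hx₁'⟩⟩ := hc
    have h₀ : deriv q x₀ < -1 := (halt x₀ hx₀).resolve_left (not_lt.mpr hx₀')
    have h₁ : 1 < deriv q x₁ := (halt x₁ hx₁).resolve_right (not_lt.mpr hx₁')
    have h0mem : (0:ℝ) ∈ uIcc (deriv q x₀) (deriv q x₁) := by
      rw [Set.mem_uIcc]; left; constructor <;> linarith
    obtain ⟨c, hc₁, hc₂⟩ :=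
      intermediate_value_uIcc (hcont.continuousOn (s := uIcc x₀ x₁)) h0mem
    have hcR : c ∈ Iic R := by
      rcases Set.mem_uIcc.mp hc₁ with h | h
      · exact le_trans h.2 hx₁
      · exact le_trans h.2 hx₀
    have := hcon c hcR
    rw [hc₂, abs_zero] at this
    linarith
  have hftc : ∀ x, x ≤ R → q R - q x = ∫ t in x..R, deriv q t := by
    intro x hx
    exact (intervalIntegral.integral_deriv_eq_sub (fun t _ => hdiff t)
      (hcont.intervalIntegrable x R)).symm
  rcases hsign with hs | hs
  · set x := R - q R - 1 with hxdef
    have hx : x ≤ R := by have := (hpos R).le; simp [hxdef]; linarith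
    have h1 : ∫ t in x..R, (1:ℝ) ≤ ∫ t in x..R, deriv q t := by
      apply intervalIntegral.integral_mono_on hx intervalIntegrable_const
        (hcont.intervalIntegrable x R)
      intro t ht
      exact (hs t ht.2).le
    rw [intervalIntegral.integral_const] at h1
    have := hftc x hx
    have hqx := hpos x
    simp only [smul_eq_mul, mul_one] at h1
    have hxR : R - x = q R + 1 := by simp [hxdef]; ring
    linarith
  · have hgrow : ∀ x, x ≤ R → R - x ≤ q x := by
      intro x hx
      have h1 : ∫ t in x..R, deriv q t ≤ ∫ t in x..R, (-1:ℝ) := by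
        apply intervalIntegral.integral_mono_on hx (hcont.intervalIntegrable x R)
          intervalIntegrable_const
        intro t ht
        exact (hs t ht.2).le
      rw [intervalIntegral.integral_const] at h1
      have := hftc x hx
      have hq0 := (hpos R).le
      simp only [smul_eq_mul, mul_neg, mul_one] at h1
      linarith
    have hsub : Iic (R - 1) ⊆ {a | 1 ≤ q a} := by
      intro x hx
      simp only [Set.mem_Iic] at hx
      have := hgrow x (by linarith)
      simp only [Set.mem_setOf_eq]
      linarith
    have hlt := hqi.measure_ge_lt_top (by norm_num : (0:ℝ) < 1)
    have : volume (Iic (R - 1)) ≤ volume {a | 1 ≤ q a} := measure_mono hsub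
    rw [Real.volume_Iic] at this
    exact absurd (lt_of_le_of_lt this hlt) (by simp)


lemma exists_small_deriv_right (q : ℝ → ℝ) (hpos : ∀ z, 0 < q z)
    (hdiff : ∀ x, DifferentiableAt ℝ q x) (hcont : Continuous (deriv q))
    (hqi : Integrable q) : ∀ R : ℝ, ∃ b, R ≤ b ∧ |deriv q b| ≤ 1 := by
  intro R
  by_contra h
  push_neg at h
  exact not_always_big_deriv q hpos hdiff hcont hqi R fun b hb => h b hb

lemma exists_small_deriv_left (q : ℝ → ℝ) (hpos : ∀ z, 0 < q z)
    (hdiff : ∀ x, DifferentiableAt ℝ q x) (hcont : Continuous (deriv q))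
    (hqi : Integrable q) : ∀ R : ℝ, ∃ a, a ≤ R ∧ |deriv q a| ≤ 1 := by
  intro R
  by_contra h
  push_neg at h
  exact not_always_big_deriv_left q hpos hdiff hcont hqi R fun a ha => h a ha

lemma integrable_fisher (q : ℝ → ℝ) (hpos : ∀ z, 0 < q z)
    (hsmooth : ContDiff ℝ 2 q) (hqi : Integrable q)
    (hC : Integrable (fun z => |deriv (deriv (fun s => Real.log (q s))) z| * q z)) :
    Integrable (fun x => q x * (deriv (fun s => Real.log (q s)) x) ^ 2) := by
  set L : ℝ → ℝ := fun s => Real.log (q s) with hLdef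
  have hqdiff : ∀ x, DifferentiableAt ℝ q x := fun x =>
    hsmooth.differentiable (by norm_num) x
  have hLder : ∀ x, HasDerivAt L (deriv q x / q x) x := fun x =>
    (hqdiff x).hasDerivAt.log (hpos x).ne'
  have hL'eq : ∀ x, deriv L x = deriv q x / q x := fun x => (hLder x).deriv
  have hq'eq : ∀ x, deriv q x = q x * deriv L x := by
    intro x
    rw [hL'eq x, mul_comm, div_mul_eq_mul_div, mul_div_assoc, div_self (hpos x).ne', mul_one]
  have hLsmooth : ContDiff ℝ 2 L := by
    rw [contDiff_iff_contDiffAt]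
    intro x
    exact (Real.contDiffAt_log.mpr (hpos x).ne').comp x hsmooth.contDiffAt
  have hL'smooth : ContDiff ℝ 1 (deriv L) := hLsmooth.iterate_deriv' 1 1
  have hL'cont : Continuous (deriv L) := hL'smooth.continuous
  have hL''cont : Continuous (deriv (deriv L)) := by
    have := (hLsmooth.iterate_deriv' 0 2).continuous
    simpa [Function.iterate_succ, Function.comp] using this
  have hq'cont : Continuous (deriv q) := (hsmooth.iterate_deriv' 1 1).continuous
  have hL'der : ∀ x, HasDerivAt (deriv L) (deriv (deriv L) x) x := fun x =>
    ((hL'smooth.differentiable (by norm_num)) x).hasDerivAt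
  set F : ℝ → ℝ := fun x => q x * (deriv L x) ^ 2 with hFdef
  have hFcont : Continuous F := (hsmooth.continuous.mul (hL'cont.pow 2))
  have hF0 : ∀ x, 0 ≤ F x := fun x => mul_nonneg (hpos x).le (sq_nonneg _)
  set C : ℝ := ∫ z, |deriv (deriv L) z| * q z with hCdef
  have hC0 : 0 ≤ᵐ[volume] fun z => |deriv (deriv L) z| * q z :=
    Filter.Eventually.of_forall fun z => mul_nonneg (abs_nonneg _) (hpos z).le
  -- interval bound
  have hibp : ∀ a b : ℝ, a ≤ b →
      ∫ x in a..b, F x ≤ |deriv q a| + |deriv q b| + C := by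
    intro a b hab
    have h1 : ∫ x in a..b, deriv L x * deriv q x
        = deriv L b * q b - deriv L a * q a - ∫ x in a..b, deriv (deriv L) x * q x := by
      apply intervalIntegral.integral_mul_deriv_eq_deriv_mul
        (fun x _ => hL'der x) (fun x _ => (hqdiff x).hasDerivAt)
        (hL''cont.intervalIntegrable a b) (hq'cont.intervalIntegrable a b)
    have h2 : ∫ x in a..b, F x = ∫ x in a..b, deriv L x * deriv q x := by
      apply intervalIntegral.integral_congr
      intro x _
      show q x * deriv L x ^ 2 = deriv L x * deriv q x
      rw [hq'eq x]; ring
    have h3 : |∫ x in a..b, deriv (deriv L) x * q x| ≤ C := by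
      have habs : |∫ x in a..b, deriv (deriv L) x * q x|
          ≤ ∫ x in a..b, |deriv (deriv L) x * q x| :=
        intervalIntegral.abs_integral_le_integral_abs hab
      have heq : (∫ x in a..b, |deriv (deriv L) x * q x|)
          = ∫ x in Set.Ioc a b, |deriv (deriv L) x| * q x := by
        rw [intervalIntegral.integral_of_le hab]
        apply setIntegral_congr_fun measurableSet_Ioc
        intro x _
        show |deriv (deriv L) x * q x| = |deriv (deriv L) x| * q x
        rw [abs_mul, abs_of_nonneg (hpos x).le]
      have hle : (∫ x in Set.Ioc a b, |deriv (deriv L) x| * q x) ≤ C :=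
        setIntegral_le_integral hC hC0
      calc |∫ x in a..b, deriv (deriv L) x * q x|
          ≤ ∫ x in a..b, |deriv (deriv L) x * q x| := habs
        _ = ∫ x in Set.Ioc a b, |deriv (deriv L) x| * q x := heq
        _ ≤ C := hle
    have hqb : deriv L b * q b ≤ |deriv q b| := by
      rw [hq'eq b]; rw [abs_mul]
      calc deriv L b * q b ≤ |deriv L b * q b| := le_abs_self _
        _ = |q b| * |deriv L b| := by rw [abs_mul]; ring
    have hqa : -(deriv L a * q a) ≤ |deriv q a| := by
      rw [hq'eq a, abs_mul]
      calc -(deriv L a * q a) ≤ |deriv L a * q a| := neg_le_abs _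
        _ = |q a| * |deriv L a| := by rw [abs_mul]; ring
    rw [h2, h1]
    have := neg_abs_le (∫ x in a..b, deriv (deriv L) x * q x)
    linarith
  -- choose endpoint sequences
  have hbs : ∀ n : ℕ, ∃ b, (n:ℝ) ≤ b ∧ |deriv q b| ≤ 1 :=
    fun n => exists_small_deriv_right q hpos hqdiff hq'cont hqi n
  have has : ∀ n : ℕ, ∃ a, a ≤ -(n:ℝ) ∧ |deriv q a| ≤ 1 :=
    fun n => exists_small_deriv_left q hpos hqdiff hq'cont hqi (-(n:ℝ))
  set bseq : ℕ → ℝ := fun n => (hbs n).choose with hbseq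
  set aseq : ℕ → ℝ := fun n => (has n).choose with haseq
  have hb1 : ∀ n : ℕ, (n:ℝ) ≤ bseq n := fun n => (hbs n).choose_spec.1
  have hb2 : ∀ n, |deriv q (bseq n)| ≤ 1 := fun n => (hbs n).choose_spec.2
  have ha1 : ∀ n, aseq n ≤ -(n:ℝ) := fun n => (has n).choose_spec.1
  have ha2 : ∀ n, |deriv q (aseq n)| ≤ 1 := fun n => (has n).choose_spec.2
  have hab : ∀ n, aseq n ≤ bseq n := fun n => by
    have h1 := ha1 n; have h2 := hb1 n
    have : (0:ℝ) ≤ (n:ℝ) := Nat.cast_nonneg n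
    linarith
  have hfi : ∀ i : ℕ, IntegrableOn F (Set.Ioc (aseq i) (bseq i)) := fun i =>
    (hFcont.integrableOn_Icc).mono_set Set.Ioc_subset_Icc_self
  have hta : Tendsto aseq atTop atBot :=
    tendsto_atBot_mono ha1 (tendsto_neg_atBot_iff.mpr tendsto_natCast_atTop_atTop)
  have htb : Tendsto bseq atTop atTop :=
    tendsto_atTop_mono hb1 tendsto_natCast_atTop_atTop
  have hbound : ∀ i : ℕ, (∫ x in aseq i..bseq i, ‖F x‖) ≤ 2 + C := by
    intro i
    have hnorm : (∫ x in aseq i..bseq i, ‖F x‖) = ∫ x in aseq i..bseq i, F x := by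
      apply intervalIntegral.integral_congr
      intro x _
      exact Real.norm_of_nonneg (hF0 x)
    rw [hnorm]
    have := hibp (aseq i) (bseq i) (hab i)
    have h2 := ha2 i; have h1 := hb2 i
    linarith
  exact integrable_of_intervalIntegral_norm_bounded (2 + C) hfi hta htb
    (Filter.Eventually.of_forall hbound)


lemma tv_shift_bound (q : ℝ → ℝ) (hsmooth : ContDiff ℝ 2 q)
    (hqi : Integrable q) (hd : Integrable (deriv q)) (μ : ℝ) (hμ0 : 0 ≤ μ) :
    ∫ x, |q (x - μ) - q (x + μ)| ≤ 2 * μ * ∫ x, |deriv q x| := by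
  have hqdiff : ∀ x, DifferentiableAt ℝ q x := fun x =>
    hsmooth.differentiable (by norm_num) x
  have hq'cont : Continuous (deriv q) := (hsmooth.iterate_deriv' 1 1).continuous
  set K : ℝ := ∫ x, |deriv q x| with hK
  have hK0 : 0 ≤ K := integral_nonneg fun x => abs_nonneg _
  have hint : Integrable (fun x => |q (x - μ) - q (x + μ)|) :=
    ((hqi.comp_sub_right μ).sub (hqi.comp_add_right μ)).abs
  -- pointwise bound
  have hpt : ∀ x : ℝ, ENNReal.ofReal (|q (x - μ) - q (x + μ)|)
      ≤ ∫⁻ t in Set.Ioc (x - μ) (x + μ), ENNReal.ofReal |deriv q t| := by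
    intro x
    have hab : x - μ ≤ x + μ := by linarith
    have hftc : q (x + μ) - q (x - μ) = ∫ t in (x - μ)..(x + μ), deriv q t :=
      (intervalIntegral.integral_deriv_eq_sub (fun t _ => hqdiff t)
        (hq'cont.intervalIntegrable _ _)).symm
    have habs : |q (x - μ) - q (x + μ)| ≤ ∫ t in (x - μ)..(x + μ), |deriv q t| := by
      rw [abs_sub_comm, hftc]
      exact intervalIntegral.abs_integral_le_integral_abs hab
    have heq : (∫ t in (x - μ)..(x + μ), |deriv q t|)
        = ∫ t in Set.Ioc (x - μ) (x + μ), |deriv q t| :=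
      intervalIntegral.integral_of_le hab
    have h2 : ENNReal.ofReal (∫ t in Set.Ioc (x - μ) (x + μ), |deriv q t|)
        = ∫⁻ t in Set.Ioc (x - μ) (x + μ), ENNReal.ofReal |deriv q t| := by
      apply ofReal_integral_eq_lintegral_ofReal
      · exact hd.abs.integrableOn
      · exact Filter.Eventually.of_forall fun t => abs_nonneg _
    calc ENNReal.ofReal (|q (x - μ) - q (x + μ)|)
        ≤ ENNReal.ofReal (∫ t in (x - μ)..(x + μ), |deriv q t|) :=
          ENNReal.ofReal_le_ofReal habs
      _ = ∫⁻ t in Set.Ioc (x - μ) (x + μ), ENNReal.ofReal |deriv q t| := by rw [heq, h2]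
  -- Tonelli
  have hmeas : Measurable (Function.uncurry fun (x t : ℝ) =>
      (Set.Ioc (x - μ) (x + μ)).indicator (fun t => ENNReal.ofReal |deriv q t|) t) := by
    have heq : (Function.uncurry fun (x t : ℝ) =>
        (Set.Ioc (x - μ) (x + μ)).indicator (fun t => ENNReal.ofReal |deriv q t|) t)
        = Set.indicator {p : ℝ × ℝ | p.1 - μ < p.2 ∧ p.2 ≤ p.1 + μ}
            (fun p => ENNReal.ofReal |deriv q p.2|) := by
      funext p
      rcases p with ⟨x, t⟩
      simp [Function.uncurry, Set.indicator, Set.mem_Ioc]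
    rw [heq]
    apply Measurable.indicator
    · exact ((hq'cont.measurable.comp measurable_snd).abs).ennreal_ofReal
    · apply MeasurableSet.inter
      · exact measurableSet_lt (measurable_fst.sub measurable_const) measurable_snd
      · exact measurableSet_le measurable_snd (measurable_fst.add measurable_const)
  have hswap : ∫⁻ x, ∫⁻ t, (Set.Ioc (x - μ) (x + μ)).indicator
        (fun t => ENNReal.ofReal |deriv q t|) t
      = ∫⁻ t, ∫⁻ x, (Set.Ioc (x - μ) (x + μ)).indicator
        (fun t => ENNReal.ofReal |deriv q t|) t := by
    exact lintegral_lintegral_swap hmeas.aemeasurable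
  have hinner : ∀ t : ℝ, (∫⁻ x, (Set.Ioc (x - μ) (x + μ)).indicator
      (fun t => ENNReal.ofReal |deriv q t|) t) = ENNReal.ofReal |deriv q t| * ENNReal.ofReal (2 * μ) := by
    intro t
    have heq : (fun x => (Set.Ioc (x - μ) (x + μ)).indicator
        (fun t => ENNReal.ofReal |deriv q t|) t)
        = (Set.Ico (t - μ) (t + μ)).indicator (fun _ => ENNReal.ofReal |deriv q t|) := by
      funext x
      simp only [Set.indicator, Set.mem_Ioc, Set.mem_Ico]
      have : (x - μ < t ∧ t ≤ x + μ) ↔ (t - μ ≤ x ∧ x < t + μ) := by constructor <;> (intro h; constructor <;> linarith [h.1, h.2])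
      by_cases h : x - μ < t ∧ t ≤ x + μ
      · rw [if_pos h, if_pos (this.mp h)]
      · rw [if_neg h, if_neg (fun hc => h (this.mpr hc))]
    rw [heq, lintegral_indicator_const measurableSet_Ico, Real.volume_Ico]
    congr 1
    ring_nf
  calc ∫ x, |q (x - μ) - q (x + μ)|
      = (ENNReal.ofReal (∫ x, |q (x - μ) - q (x + μ)|)).toReal := by
        rw [ENNReal.toReal_ofReal (integral_nonneg fun x => abs_nonneg _)]
    _ ≤ (ENNReal.ofReal (2 * μ * K)).toReal := by
        apply ENNReal.toReal_mono ENNReal.ofReal_ne_top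
        rw [ofReal_integral_eq_lintegral_ofReal hint
          (Filter.Eventually.of_forall fun x => abs_nonneg _)]
        calc ∫⁻ x, ENNReal.ofReal |q (x - μ) - q (x + μ)|
            ≤ ∫⁻ x, ∫⁻ t in Set.Ioc (x - μ) (x + μ), ENNReal.ofReal |deriv q t| :=
              lintegral_mono hpt
          _ = ∫⁻ x, ∫⁻ t, (Set.Ioc (x - μ) (x + μ)).indicator
                (fun t => ENNReal.ofReal |deriv q t|) t := by
              congr 1; funext x; rw [lintegral_indicator measurableSet_Ioc]
          _ = ∫⁻ t, ∫⁻ x, (Set.Ioc (x - μ) (x + μ)).indicator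
                (fun t => ENNReal.ofReal |deriv q t|) t := hswap
          _ = ∫⁻ t, ENNReal.ofReal |deriv q t| * ENNReal.ofReal (2 * μ) := by
              congr 1; funext t; exact hinner t
          _ = (∫⁻ t, ENNReal.ofReal |deriv q t|) * ENNReal.ofReal (2 * μ) :=
              lintegral_mul_const _ (hq'cont.measurable.abs.ennreal_ofReal)
          _ = ENNReal.ofReal K * ENNReal.ofReal (2 * μ) := by
              rw [← ofReal_integral_eq_lintegral_ofReal hd.abs
                (Filter.Eventually.of_forall fun t => abs_nonneg _)]
          _ = ENNReal.ofReal (2 * μ * K) := by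
              rw [← ENNReal.ofReal_mul hK0]; congr 1; ring
    _ = 2 * μ * K := ENNReal.toReal_ofReal (by positivity)


lemma exists_good_coupling (f g : ℝ → ℝ) (hfc : Continuous f) (hgc : Continuous g)
    (hf0 : ∀ x, 0 ≤ f x) (hg0 : ∀ x, 0 ≤ g x)
    (hfi : Integrable f) (hgi : Integrable g)
    (hf1 : ∫ x, f x = 1) (hg1 : ∫ x, g x = 1) :
    ∃ π' : Measure (ℝ × ℝ), IsProbabilityMeasure π' ∧
      π'.map Prod.fst = volume.withDensity (fun x => ENNReal.ofReal (f x)) ∧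
      π'.map Prod.snd = volume.withDensity (fun x => ENNReal.ofReal (g x)) ∧
      π' {p | p.1 ≠ p.2} ≤ ENNReal.ofReal (∫ x, |f x - g x|) := by
  classical
  set m : ℝ → ℝ := fun x => min (f x) (g x) with hm
  have hmc : Continuous m := hfc.min hgc
  have hm0 : ∀ x, 0 ≤ m x := fun x => le_min (hf0 x) (hg0 x)
  have hmf : ∀ x, m x ≤ f x := fun x => min_le_left _ _
  have hmg : ∀ x, m x ≤ g x := fun x => min_le_right _ _
  have hmi : Integrable m := by
    apply hfi.mono' hmc.aestronglyMeasurable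
    exact Filter.Eventually.of_forall fun x => by
      rw [Real.norm_of_nonneg (hm0 x)]; exact hmf x
  have hfmi : Integrable (fun x => f x - m x) := hfi.sub hmi
  have hgmi : Integrable (fun x => g x - m x) := hgi.sub hmi
  set t : ℝ := ∫ x, m x with ht
  have ht0 : 0 ≤ t := integral_nonneg hm0
  have ht1 : t ≤ 1 := by
    rw [ht, ← hf1]; exact integral_mono hmi hfi hmf
  set β : ENNReal := ENNReal.ofReal (1 - t) with hβ
  have hβtop : β ≠ ⊤ := ENNReal.ofReal_ne_top
  set M : Measure ℝ := volume.withDensity (fun x => ENNReal.ofReal (m x)) with hM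
  set R : Measure ℝ := volume.withDensity (fun x => ENNReal.ofReal (f x - m x)) with hR
  set S : Measure ℝ := volume.withDensity (fun x => ENNReal.ofReal (g x - m x)) with hS
  have hmmeas : Measurable fun x => ENNReal.ofReal (m x) := hmc.measurable.ennreal_ofReal
  have hrmeas : Measurable fun x => ENNReal.ofReal (f x - m x) :=
    (hfc.sub hmc).measurable.ennreal_ofReal
  have hsmeas : Measurable fun x => ENNReal.ofReal (g x - m x) :=
    (hgc.sub hmc).measurable.ennreal_ofReal
  have hMuniv : M Set.univ = ENNReal.ofReal t := by
    rw [hM, withDensity_apply _ MeasurableSet.univ, Measure.restrict_univ, ht,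
      ofReal_integral_eq_lintegral_ofReal hmi (Filter.Eventually.of_forall hm0)]
  have hRuniv : R Set.univ = β := by
    rw [hR, withDensity_apply _ MeasurableSet.univ, Measure.restrict_univ, hβ,
      ← ofReal_integral_eq_lintegral_ofReal hfmi
        (Filter.Eventually.of_forall fun x => sub_nonneg.mpr (hmf x))]
    congr 1
    rw [integral_sub hfi hmi, hf1]
  have hSuniv : S Set.univ = β := by
    rw [hS, withDensity_apply _ MeasurableSet.univ, Measure.restrict_univ, hβ,
      ← ofReal_integral_eq_lintegral_ofReal hgmi
        (Filter.Eventually.of_forall fun x => sub_nonneg.mpr (hmg x))]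
    congr 1
    rw [integral_sub hgi hmi, hg1]
  haveI : IsFiniteMeasure R := ⟨by rw [hRuniv]; exact ENNReal.ofReal_lt_top⟩
  haveI : IsFiniteMeasure S := ⟨by rw [hSuniv]; exact ENNReal.ofReal_lt_top⟩
  have hdiag : Measurable fun x : ℝ => (x, x) := measurable_id.prodMk measurable_id
  set D : Measure (ℝ × ℝ) := M.map (fun x => (x, x)) with hD
  set π' : Measure (ℝ × ℝ) := D + β⁻¹ • (R.prod S) with hπ'
  -- key: if β = 0 then R = 0 and S = 0
  have hRzero : β = 0 → R = 0 := by
    intro h0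
    have ht1' : t = 1 := by
      rw [hβ] at h0
      have := ENNReal.ofReal_eq_zero.mp h0
      linarith
    have hzero : (∫ x, (f x - m x)) = 0 := by
      rw [integral_sub hfi hmi, hf1, ← ht, ht1', sub_self]
    have hae : (fun x => f x - m x) =ᵐ[volume] 0 :=
      (integral_eq_zero_iff_of_nonneg (fun x => sub_nonneg.mpr (hmf x)) hfmi).mp hzero
    have : (fun x => ENNReal.ofReal (f x - m x)) =ᵐ[volume] 0 := by
      filter_upwards [hae] with x hx
      simp only [Pi.zero_apply] at hx ⊢
      rw [hx, ENNReal.ofReal_zero]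
    rw [hR, withDensity_congr_ae this, withDensity_zero]
  have hSzero : β = 0 → S = 0 := by
    intro h0
    have ht1' : t = 1 := by
      rw [hβ] at h0
      have := ENNReal.ofReal_eq_zero.mp h0
      linarith
    have hzero : (∫ x, (g x - m x)) = 0 := by
      rw [integral_sub hgi hmi, hg1, ← ht, ht1', sub_self]
    have hae : (fun x => g x - m x) =ᵐ[volume] 0 :=
      (integral_eq_zero_iff_of_nonneg (fun x => sub_nonneg.mpr (hmg x)) hgmi).mp hzero
    have : (fun x => ENNReal.ofReal (g x - m x)) =ᵐ[volume] 0 := by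
      filter_upwards [hae] with x hx
      simp only [Pi.zero_apply] at hx ⊢
      rw [hx, ENNReal.ofReal_zero]
    rw [hS, withDensity_congr_ae this, withDensity_zero]
  have hsmulR : β⁻¹ • (β • R) = R := by
    rcases eq_or_ne β 0 with h0 | h0
    · rw [hRzero h0]; simp
    · rw [smul_smul, ENNReal.inv_mul_cancel h0 hβtop, one_smul]
  have hsmulS : β⁻¹ • (β • S) = S := by
    rcases eq_or_ne β 0 with h0 | h0
    · rw [hSzero h0]; simp
    · rw [smul_smul, ENNReal.inv_mul_cancel h0 hβtop, one_smul]
  -- fst marginal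
  have hfst : π'.map Prod.fst = volume.withDensity (fun x => ENNReal.ofReal (f x)) := by
    have h1 : D.map Prod.fst = M := by
      rw [hD, Measure.map_map measurable_fst hdiag]
      have : (Prod.fst ∘ fun x : ℝ => (x, x)) = id := rfl
      rw [this, Measure.map_id]
    have h2 : (R.prod S).map Prod.fst = β • R := by
      rw [Measure.map_fst_prod, hSuniv]
    rw [hπ', Measure.map_add _ _ measurable_fst, Measure.map_smul, h1, h2, hsmulR]
    rw [hM, hR, ← withDensity_add_right _ hrmeas]
    congr 1
    funext x
    simp only [Pi.add_apply]
    rw [← ENNReal.ofReal_add (hm0 x) (sub_nonneg.mpr (hmf x))]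
    congr 1
    ring
  have hsnd : π'.map Prod.snd = volume.withDensity (fun x => ENNReal.ofReal (g x)) := by
    have h1 : D.map Prod.snd = M := by
      rw [hD, Measure.map_map measurable_snd hdiag]
      have : (Prod.snd ∘ fun x : ℝ => (x, x)) = id := rfl
      rw [this, Measure.map_id]
    have h2 : (R.prod S).map Prod.snd = β • S := by
      rw [Measure.map_snd_prod, hRuniv]
    rw [hπ', Measure.map_add _ _ measurable_snd, Measure.map_smul, h1, h2, hsmulS]
    rw [hM, hS, ← withDensity_add_right _ hsmeas]
    congr 1
    funext x
    simp only [Pi.add_apply]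
    rw [← ENNReal.ofReal_add (hm0 x) (sub_nonneg.mpr (hmg x))]
    congr 1
    ring
  have hββ : β⁻¹ * (β * β) = β := by
    rcases eq_or_ne β 0 with h0 | h0
    · simp [h0]
    · rw [← mul_assoc, ENNReal.inv_mul_cancel h0 hβtop, one_mul]
  have hprob : IsProbabilityMeasure π' := by
    constructor
    rw [hπ', Measure.add_apply, Measure.smul_apply, smul_eq_mul, hD,
      Measure.map_apply hdiag MeasurableSet.univ]
    have : (fun x : ℝ => (x, x)) ⁻¹' Set.univ = Set.univ := by simp
    rw [this, hMuniv, ← Set.univ_prod_univ, Measure.prod_prod, hRuniv, hSuniv, hββ, hβ,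
      ← ENNReal.ofReal_add ht0 (by linarith)]
    norm_num
  have hne : MeasurableSet {p : ℝ × ℝ | p.1 ≠ p.2} := by
    have : {p : ℝ × ℝ | p.1 ≠ p.2} = {p : ℝ × ℝ | p.1 = p.2}ᶜ := rfl
    rw [this]
    exact ((isClosed_eq continuous_fst continuous_snd).measurableSet).compl
  have hmis : π' {p | p.1 ≠ p.2} ≤ ENNReal.ofReal (∫ x, |f x - g x|) := by
    have h1 : D {p : ℝ × ℝ | p.1 ≠ p.2} = 0 := by
      rw [hD, Measure.map_apply hdiag hne]
      have : (fun x : ℝ => (x, x)) ⁻¹' {p : ℝ × ℝ | p.1 ≠ p.2} = ∅ := by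
        ext x; simp
      rw [this, measure_empty]
    have h2 : π' {p | p.1 ≠ p.2} ≤ β := by
      rw [hπ', Measure.add_apply, h1, zero_add, Measure.smul_apply, smul_eq_mul]
      calc β⁻¹ * (R.prod S) {p | p.1 ≠ p.2}
          ≤ β⁻¹ * (R.prod S) Set.univ :=
            mul_le_mul_right (measure_mono (Set.subset_univ _)) _
        _ = β⁻¹ * (β * β) := by
            rw [← Set.univ_prod_univ, Measure.prod_prod, hRuniv, hSuniv]
        _ = β := hββ
    refine h2.trans ?_
    rw [hβ]
    apply ENNReal.ofReal_le_ofReal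
    have hsub : (1 : ℝ) - t = ∫ x, (f x - m x) := by
      rw [integral_sub hfi hmi, hf1, ht]
    rw [hsub]
    apply integral_mono hfmi ((hfi.sub hgi).abs)
    intro x
    show f x - min (f x) (g x) ≤ |f x - g x|
    rcases le_total (f x) (g x) with h | h
    · rw [min_eq_left h, sub_self]
      exact abs_nonneg _
    · rw [min_eq_right h]
      exact le_abs_self _
  exact ⟨π', hprob, hfst, hsnd, hmis⟩


set_option maxHeartbeats 2000000 in
theorem maximal_coupling_mismatch_decay (q : ℝ → ℝ) (hpos : ∀ z, 0 < q z)
    (hsmooth : ContDiff ℝ 2 q)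
    (hprob : ∫ z : ℝ, q z = 1)
    (hq' : ∫ z : ℝ, deriv q z = 0)
    (ζ : ℝ) (hζ : 0 < ζ)
    (hmom : Integrable (fun z : ℝ =>
      (sSup ((fun t => |deriv (deriv (fun s => Real.log (q s))) t|) '' Set.Icc (z - ζ) (z + ζ))) ^ 2
        * q z))
    (c : ℝ) (hc : 0 < c) (μd : ℕ → ℝ) (hμ : ∀ d, μd d = c / Real.sqrt d)
    (π : ℕ → Measure (ℝ × ℝ)) (hπprob : ∀ d, IsProbabilityMeasure (π d))
    (hfst : ∀ d, (π d).map Prod.fst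
      = volume.withDensity (fun x => ENNReal.ofReal (q (x - μd d))))
    (hsnd : ∀ d, (π d).map Prod.snd
      = volume.withDensity (fun x => ENNReal.ofReal (q (x + μd d))))
    (hmax : ∀ d, ∀ π' : Measure (ℝ × ℝ), IsProbabilityMeasure π' →
      π'.map Prod.fst = volume.withDensity (fun x => ENNReal.ofReal (q (x - μd d))) →
      π'.map Prod.snd = volume.withDensity (fun x => ENNReal.ofReal (q (x + μd d))) →
      (π d) {p | p.1 ≠ p.2} ≤ π' {p | p.1 ≠ p.2}) :
    ∀ δ > (0 : ℝ), Tendsto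
      (fun d : ℕ => ((π d) {p | p.1 ≠ p.2}).toReal / (d : ℝ) ^ (-(1 : ℝ) / 2 + δ))
      atTop (nhds 0) := by
  intro δ hδ
  have hqcont : Continuous q := hsmooth.continuous
  have hqi : Integrable q := by
    by_contra h
    rw [integral_undef h] at hprob
    exact one_ne_zero hprob.symm
  -- smoothness of L = log q
  have hqdiff : ∀ x, DifferentiableAt ℝ q x := fun x =>
    hsmooth.differentiable (by norm_num) x
  have hLder : ∀ x, HasDerivAt (fun s => Real.log (q s)) (deriv q x / q x) x := fun x =>
    (hqdiff x).hasDerivAt.log (hpos x).ne'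
  have hq'eq : ∀ x, deriv q x = q x * deriv (fun s => Real.log (q s)) x := by
    intro x
    rw [(hLder x).deriv, mul_comm, div_mul_eq_mul_div, mul_div_assoc,
      div_self (hpos x).ne', mul_one]
  have hLsmooth : ContDiff ℝ 2 (fun s => Real.log (q s)) := by
    rw [contDiff_iff_contDiffAt]
    intro x
    exact (Real.contDiffAt_log.mpr (hpos x).ne').comp x hsmooth.contDiffAt
  have hL'cont : Continuous (deriv (fun s => Real.log (q s))) :=
    (hLsmooth.iterate_deriv' 1 1).continuous
  have hL''cont : Continuous (deriv (deriv (fun s => Real.log (q s)))) := by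
    have := (hLsmooth.iterate_deriv' 0 2).continuous
    simpa [Function.iterate_succ, Function.comp] using this
  have hq'cont : Continuous (deriv q) := (hsmooth.iterate_deriv' 1 1).continuous
  -- |L''| * q is integrable (from the moment hypothesis)
  have hC : Integrable (fun z => |deriv (deriv (fun s => Real.log (q s))) z| * q z) := by
    have hbd : Integrable (fun z : ℝ =>
        ((sSup ((fun t => |deriv (deriv (fun s => Real.log (q s))) t|)
          '' Set.Icc (z - ζ) (z + ζ))) ^ 2 * q z + q z) / 2) := (hmom.add hqi).div_const 2
    apply Integrable.mono' hbd ((hL''cont.abs.mul hqcont).aestronglyMeasurable)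
    apply Filter.Eventually.of_forall
    intro z
    set W : ℝ := sSup ((fun t => |deriv (deriv (fun s => Real.log (q s))) t|)
      '' Set.Icc (z - ζ) (z + ζ)) with hW
    have hWz : |deriv (deriv (fun s => Real.log (q s))) z| ≤ W := by
      apply le_csSup
      · exact ((isCompact_Icc.image_of_continuousOn
          (hL''cont.abs.continuousOn))).bddAbove
      · exact ⟨z, ⟨by linarith, by linarith⟩, rfl⟩
    simp only [Pi.mul_apply]
    rw [Real.norm_of_nonneg (mul_nonneg (abs_nonneg _) (hpos z).le)]
    have h1 : |deriv (deriv (fun s => Real.log (q s))) z| * q z ≤ W * q z :=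
      mul_le_mul_of_nonneg_right hWz (hpos z).le
    nlinarith [mul_nonneg (sq_nonneg (W - 1)) (hpos z).le]
  have hF : Integrable (fun x => q x * (deriv (fun s => Real.log (q s)) x) ^ 2) :=
    integrable_fisher q hpos hsmooth hqi hC
  have hd : Integrable (deriv q) := by
    apply Integrable.mono' ((hF.add hqi).div_const 2) hq'cont.aestronglyMeasurable
    apply Filter.Eventually.of_forall
    intro x
    rw [Real.norm_eq_abs, hq'eq x, abs_mul, abs_of_nonneg (hpos x).le]
    simp only [Pi.add_apply]
    set u : ℝ := deriv (fun s => Real.log (q s)) x with hu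
    have h3 : 0 ≤ q x * (|u| - 1) ^ 2 := mul_nonneg (hpos x).le (sq_nonneg _)
    have h4 : q x * (|u| - 1) ^ 2 = q x * u ^ 2 - 2 * (q x * |u|) + q x := by
      calc q x * (|u| - 1) ^ 2 = q x * (|u| ^ 2 - 2 * |u| + 1) := by ring
        _ = q x * u ^ 2 - 2 * (q x * |u|) + q x := by rw [sq_abs]; ring
    linarith
  set K : ℝ := ∫ x, |deriv q x| with hK
  have hK0 : 0 ≤ K := integral_nonneg fun x => abs_nonneg _
  have hμ0 : ∀ d, 0 ≤ μd d := fun d => by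
    rw [hμ]
    positivity
  -- the coupling bound
  have hmain : ∀ d : ℕ, (π d) {p | p.1 ≠ p.2} ≤ ENNReal.ofReal (2 * μd d * K) := by
    intro d
    obtain ⟨π', hp, h1, h2, h3⟩ := exists_good_coupling
      (fun x => q (x - μd d)) (fun x => q (x + μd d))
      (hqcont.comp (continuous_id.sub continuous_const))
      (hqcont.comp (continuous_id.add continuous_const))
      (fun x => (hpos _).le) (fun x => (hpos _).le)
      (hqi.comp_sub_right (μd d)) (hqi.comp_add_right (μd d))
      (by rw [integral_sub_right_eq_self q (μd d)]; exact hprob)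
      (by rw [integral_add_right_eq_self q (μd d)]; exact hprob)
    refine le_trans (hmax d π' hp h1 h2) (le_trans h3 (ENNReal.ofReal_le_ofReal ?_))
    exact tv_shift_bound q hsmooth hqi hd (μd d) (hμ0 d)
  have htoReal : ∀ d : ℕ, ((π d) {p | p.1 ≠ p.2}).toReal ≤ 2 * μd d * K := fun d =>
    ENNReal.toReal_le_of_le_ofReal
      (mul_nonneg (mul_nonneg (by norm_num) (hμ0 d)) hK0) (hmain d)
  -- squeeze
  apply squeeze_zero' (g := fun d : ℕ => (2 * c * K) * (d : ℝ) ^ (-δ))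
  · apply Filter.Eventually.of_forall
    intro d
    exact div_nonneg ENNReal.toReal_nonneg (Real.rpow_nonneg (Nat.cast_nonneg d) _)
  · filter_upwards [eventually_ge_atTop 1] with d hd1
    have hdpos : (0:ℝ) < (d:ℝ) := by
      have : (1:ℝ) ≤ (d:ℝ) := by exact_mod_cast hd1
      linarith
    have hden : (0:ℝ) < (d:ℝ) ^ (-(1:ℝ)/2 + δ) := Real.rpow_pos_of_pos hdpos _
    have step1 : ((π d) {p | p.1 ≠ p.2}).toReal / (d : ℝ) ^ (-(1:ℝ)/2 + δ)
        ≤ (2 * μd d * K) / (d : ℝ) ^ (-(1:ℝ)/2 + δ) := by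
      exact div_le_div_of_nonneg_right (htoReal d) hden.le
    refine step1.trans (le_of_eq ?_)
    rw [hμ d, Real.sqrt_eq_rpow, div_eq_mul_inv c, ← Real.rpow_neg hdpos.le]
    have : (2 : ℝ) * (c * (d:ℝ) ^ (-(1/2 : ℝ))) * K / (d : ℝ) ^ (-(1:ℝ)/2 + δ)
        = 2 * c * K * ((d:ℝ) ^ (-(1/2 : ℝ)) / (d : ℝ) ^ (-(1:ℝ)/2 + δ)) := by
      ring
    rw [this, ← Real.rpow_sub hdpos]
    norm_num
  · have h1 : Tendsto (fun d : ℕ => ((d : ℝ)) ^ (-δ)) atTop (nhds 0) :=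
      (tendsto_rpow_neg_atTop hδ).comp tendsto_natCast_atTop_atTop
    have := h1.const_mul (2 * c * K)
    simpa using this
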